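/- Assume θ_i = 0 for all i, common d^max > 0, and strictly increasing remaining metric m_i := (ξ_i ℓ_i)^{-1} - ε_i. Then the Nash equilibrium of the game is unique. -/

import Mathlib

open Finset

/-- Payoff with negligible unlearning costs (`θ_i = 0`). -/
noncomputable def payoff0 {I : ℕ} (ξ ℓ ε : Fin I → ℝ) (i : Fin I)
    (d : Fin I → ℝ) : ℝ :=
  Real.log (∑ j, d j + ε i) - ξ i * ℓ i * d i

/-- Nash equilibrium of the game with common maximum data size `dmax`. -/
def IsNash0 {I : ℕ} (ξ ℓ ε : Fin I → ℝ) (dmax : ℝ) (d : Fin I → ℝ) : Prop :=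
  ∀ i : Fin I, ∀ x ∈ Set.Icc (0 : ℝ) dmax,
    payoff0 ξ ℓ ε i (Function.update d i x) ≤ payoff0 ξ ℓ ε i d

lemma log_sub_log_le' {a b : ℝ} (ha : 0 < a) (hb : 0 < b) :
    Real.log b - Real.log a ≤ (b - a) / a := by
  have h := Real.log_le_sub_one_of_pos (div_pos hb ha)
  rwa [Real.log_div hb.ne' ha.ne', div_sub_one ha.ne'] at h

lemma log_sub_log_ge' {a b : ℝ} (ha : 0 < a) (hb : 0 < b) :
    (b - a) / b ≤ Real.log b - Real.log a := by
  have h := Real.log_le_sub_one_of_pos (div_pos ha hb)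
  rw [Real.log_div ha.ne' hb.ne', div_sub_one hb.ne'] at h
  have e : (b - a) / b = -((a - b) / b) := by ring
  rw [e]; linarith

lemma sum_update_eq {I : ℕ} (d : Fin I → ℝ) (i : Fin I) (x : ℝ) :
    (∑ j, Function.update d i x j) = x + ∑ j ∈ Finset.univ.erase i, d j := by
  rw [Finset.sum_update_of_mem (Finset.mem_univ i)]
  congr 1
  · rw [Finset.sdiff_singleton_eq_erase]

lemma keyA {I : ℕ} (ξ ℓ ε : Fin I → ℝ) (dmax : ℝ)
    (hξ : ∀ i, 0 < ξ i) (hℓ : ∀ i, 0 < ℓ i) (hε : ∀ i, 0 < ε i)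
    (d : Fin I → ℝ) (hd : ∀ i, d i ∈ Set.Icc (0 : ℝ) dmax)
    (hne : IsNash0 ξ ℓ ε dmax d) (i : Fin I) (hi : d i < dmax) :
    1 ≤ ξ i * ℓ i * (∑ j, d j + ε i) := by
  by_contra hcon
  push_neg at hcon
  set c := ξ i * ℓ i with hc
  have hcpos : 0 < c := mul_pos (hξ i) (hℓ i)
  set A := (∑ j ∈ Finset.univ.erase i, d j) + ε i with hA
  have hApos : 0 < A :=
    add_pos_of_nonneg_of_pos (Finset.sum_nonneg fun j _ => (hd j).1) (hε i)
  have hsum : ∑ j, d j + ε i = A + d i := by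
    have h1 : d i + ∑ j ∈ Finset.univ.erase i, d j = ∑ j, d j :=
      Finset.add_sum_erase Finset.univ d (Finset.mem_univ i)
    rw [hA]; linarith
  have h1 : c * (A + d i) < 1 := by rw [← hsum]; exact hcon
  have hcc : c * (1 / c) = 1 := mul_one_div_cancel hcpos.ne'
  have hdi : d i < 1 / c - A := by nlinarith
  set x := min dmax ((d i + (1 / c - A)) / 2) with hx
  have hx1 : d i < x := lt_min hi (by linarith)
  have hx2 : x ≤ dmax := min_le_left _ _
  have hx3 : x < 1 / c - A := lt_of_le_of_lt (min_le_right _ _) (by linarith)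
  have hx0 : 0 ≤ x := le_of_lt (lt_of_le_of_lt (hd i).1 hx1)
  have hAx : 0 < A + x := by linarith
  have hcx : c * (A + x) < 1 := by nlinarith
  have hnash := hne i x ⟨hx0, hx2⟩
  simp only [payoff0, Function.update_self] at hnash
  rw [sum_update_eq] at hnash
  have e1 : x + (∑ j ∈ Finset.univ.erase i, d j) + ε i = A + x := by rw [hA]; ring
  rw [e1, hsum, ← hc] at hnash
  -- hnash : log (A + x) - c * x ≤ log (A + d i) - c * d i
  have hlog : (x - d i) / (A + x) ≤ Real.log (A + x) - Real.log (A + d i) := by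
    have := log_sub_log_ge' (a := A + d i) (b := A + x) (add_pos_of_pos_of_nonneg hApos (hd i).1) hAx
    have e2 : (A + x) - (A + d i) = x - d i := by ring
    rwa [e2] at this
  have h2 : (x - d i) / (A + x) ≤ c * (x - d i) := by linarith
  rw [div_le_iff₀ hAx] at h2
  nlinarith [mul_pos (sub_pos.mpr hx1) (sub_pos.mpr hcx)]

lemma keyB {I : ℕ} (ξ ℓ ε : Fin I → ℝ) (dmax : ℝ)
    (hξ : ∀ i, 0 < ξ i) (hℓ : ∀ i, 0 < ℓ i) (hε : ∀ i, 0 < ε i)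
    (d : Fin I → ℝ) (hd : ∀ i, d i ∈ Set.Icc (0 : ℝ) dmax)
    (hne : IsNash0 ξ ℓ ε dmax d) (i : Fin I) (hi : 0 < d i) :
    ξ i * ℓ i * (∑ j, d j + ε i) ≤ 1 := by
  by_contra hcon
  push_neg at hcon
  set c := ξ i * ℓ i with hc
  have hcpos : 0 < c := mul_pos (hξ i) (hℓ i)
  set A := (∑ j ∈ Finset.univ.erase i, d j) + ε i with hA
  have hApos : 0 < A :=
    add_pos_of_nonneg_of_pos (Finset.sum_nonneg fun j _ => (hd j).1) (hε i)
  have hsum : ∑ j, d j + ε i = A + d i := by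
    have h1 : d i + ∑ j ∈ Finset.univ.erase i, d j = ∑ j, d j :=
      Finset.add_sum_erase Finset.univ d (Finset.mem_univ i)
    rw [hA]; linarith
  have h1 : 1 < c * (A + d i) := by rw [← hsum]; exact hcon
  have hcc : c * (1 / c) = 1 := mul_one_div_cancel hcpos.ne'
  have hdi : 1 / c - A < d i := by nlinarith
  set x := max 0 ((d i + (1 / c - A)) / 2) with hx
  have hx1 : x < d i := max_lt hi (by linarith)
  have hx0 : 0 ≤ x := le_max_left _ _
  have hx2 : x ≤ dmax := le_trans (le_of_lt hx1) (hd i).2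
  have hx3 : 1 / c - A < x := lt_of_lt_of_le (by linarith) (le_max_right _ _)
  have hAx : 0 < A + x := by positivity
  have hcx : 1 < c * (A + x) := by nlinarith
  have hnash := hne i x ⟨hx0, hx2⟩
  simp only [payoff0, Function.update_self] at hnash
  rw [sum_update_eq] at hnash
  have e1 : x + (∑ j ∈ Finset.univ.erase i, d j) + ε i = A + x := by rw [hA]; ring
  rw [e1, hsum, ← hc] at hnash
  -- hnash : log (A + x) - c * x ≤ log (A + d i) - c * d i
  have hlog : Real.log (A + d i) - Real.log (A + x) ≤ (d i - x) / (A + x) := by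
    have := log_sub_log_le' (a := A + x) (b := A + d i) hAx (add_pos_of_pos_of_nonneg hApos (hd i).1)
    have e2 : (A + d i) - (A + x) = d i - x := by ring
    rwa [e2] at this
  have h2 : c * (d i - x) ≤ (d i - x) / (A + x) := by linarith
  rw [le_div_iff₀ hAx] at h2
  nlinarith [mul_pos (sub_pos.mpr hx1) (sub_pos.mpr hcx)]

/-- Theorem 2, uniqueness: with negligible unlearning costs, common `d^max`,
and strictly increasing remaining metric `(ξ_i ℓ_i)⁻¹ - ε_i`, the Nash
equilibrium of the game is unique. -/
theorem stmt13 (I : ℕ) (ξ ℓ ε : Fin I → ℝ) (dmax : ℝ)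
    (hξ : ∀ i, 0 < ξ i) (hℓ : ∀ i, 0 < ℓ i) (hε : ∀ i, 0 < ε i)
    (hdmax : 0 < dmax)
    (horder : ∀ i k : Fin I, i < k →
      (ξ i * ℓ i)⁻¹ - ε i < (ξ k * ℓ k)⁻¹ - ε k)
    (d d' : Fin I → ℝ)
    (hd : ∀ i, d i ∈ Set.Icc (0 : ℝ) dmax)
    (hd' : ∀ i, d' i ∈ Set.Icc (0 : ℝ) dmax)
    (hne : IsNash0 ξ ℓ ε dmax d) (hne' : IsNash0 ξ ℓ ε dmax d') :
    d = d' := by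
  -- step 1: totals are equal
  have main : ∀ (e e' : Fin I → ℝ),
      (∀ i, e i ∈ Set.Icc (0 : ℝ) dmax) → (∀ i, e' i ∈ Set.Icc (0 : ℝ) dmax) →
      IsNash0 ξ ℓ ε dmax e → IsNash0 ξ ℓ ε dmax e' →
      (∑ j, e j) < (∑ j, e' j) → False := by
    intro e e' he he' hnee hnee' hlt
    have hpt : ∀ i, e' i ≤ e i := by
      intro i
      by_contra hc
      push_neg at hc
      have h1 : 1 ≤ ξ i * ℓ i * (∑ j, e j + ε i) :=
        keyA ξ ℓ ε dmax hξ hℓ hε e he hnee i (lt_of_lt_of_le hc (he' i).2)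
      have h2 : ξ i * ℓ i * (∑ j, e' j + ε i) ≤ 1 :=
        keyB ξ ℓ ε dmax hξ hℓ hε e' he' hnee' i (lt_of_le_of_lt (he i).1 hc)
      have hcpos : 0 < ξ i * ℓ i := mul_pos (hξ i) (hℓ i)
      nlinarith
    exact absurd (Finset.sum_le_sum fun i _ => hpt i) (not_le.mpr hlt)
  have hS : (∑ j, d j) = (∑ j, d' j) := by
    rcases lt_trichotomy (∑ j, d j) (∑ j, d' j) with h | h | h
    · exact absurd h (fun h => main d d' hd hd' hne hne' h)
    · exact h
    · exact absurd h (fun h => main d' d hd' hd hne' hne h)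
  -- step 2: any index where d and d' differ satisfies S = m_i
  have hdiff : ∀ i, d i ≠ d' i → ξ i * ℓ i * (∑ j, d j + ε i) = 1 := by
    intro i hne_i
    have hcpos : 0 < ξ i * ℓ i := mul_pos (hξ i) (hℓ i)
    rcases lt_or_gt_of_ne hne_i with h | h
    · have h1 : 1 ≤ ξ i * ℓ i * (∑ j, d j + ε i) :=
        keyA ξ ℓ ε dmax hξ hℓ hε d hd hne i (lt_of_lt_of_le h (hd' i).2)
      have h2 : ξ i * ℓ i * (∑ j, d' j + ε i) ≤ 1 :=
        keyB ξ ℓ ε dmax hξ hℓ hε d' hd' hne' i (lt_of_le_of_lt (hd i).1 h)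
      rw [← hS] at h2
      linarith
    · have h1 : 1 ≤ ξ i * ℓ i * (∑ j, d' j + ε i) :=
        keyA ξ ℓ ε dmax hξ hℓ hε d' hd' hne' i (lt_of_lt_of_le h (hd i).2)
      have h2 : ξ i * ℓ i * (∑ j, d j + ε i) ≤ 1 :=
        keyB ξ ℓ ε dmax hξ hℓ hε d hd hne i (lt_of_le_of_lt (hd' i).1 h)
      rw [← hS] at h1
      linarith
  -- step 3: at most one differing index
  by_contra hcon
  have hex : ∃ i, d i ≠ d' i := by
    by_contra hall
    push_neg at hall
    exact hcon (funext hall)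
  obtain ⟨i, hi⟩ := hex
  have honly : ∀ k, k ≠ i → d k = d' k := by
    intro k hk
    by_contra hk'
    have e1 := hdiff i hi
    have e2 := hdiff k hk'
    have hmeq : (ξ i * ℓ i)⁻¹ - ε i = (ξ k * ℓ k)⁻¹ - ε k := by
      have hci : 0 < ξ i * ℓ i := mul_pos (hξ i) (hℓ i)
      have hck : 0 < ξ k * ℓ k := mul_pos (hξ k) (hℓ k)
      have hi' : ∑ j, d j + ε i = (ξ i * ℓ i)⁻¹ := by
        exact eq_inv_of_mul_eq_one_right e1
      have hk'' : ∑ j, d j + ε k = (ξ k * ℓ k)⁻¹ := by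
        exact eq_inv_of_mul_eq_one_right e2
      have : (ξ i * ℓ i)⁻¹ - ε i = ∑ j, d j := by linarith
      have : (ξ k * ℓ k)⁻¹ - ε k = ∑ j, d j := by linarith
      linarith
    rcases lt_or_gt_of_ne hk with h | h
    · exact absurd hmeq (ne_of_gt (by linarith [horder k i h]))
    · exact absurd hmeq (ne_of_lt (by linarith [horder i k h]))
  -- but the sums are equal, so d i = d' i, contradiction
  have h1 : d i + ∑ k ∈ Finset.univ.erase i, d k = ∑ k, d k :=
    Finset.add_sum_erase Finset.univ d (Finset.mem_univ i)
  have h2 : d' i + ∑ k ∈ Finset.univ.erase i, d' k = ∑ k, d' k :=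
    Finset.add_sum_erase Finset.univ d' (Finset.mem_univ i)
  have h3 : ∑ k ∈ Finset.univ.erase i, d k = ∑ k ∈ Finset.univ.erase i, d' k :=
    Finset.sum_congr rfl fun k hk => honly k (Finset.ne_of_mem_erase hk)
  exact hi (by linarith)
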